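/- Let G be a connected cograph. Then G is monopolar if and only if G contains none of the following four graphs as an induced subgraph: J1 = C4 ⊕ K1 (the 5-wheel), J2 = K1 ⊕ (P3 ∪ K2), J3 = K2 ⊕ 2K2, J4 = (K2 ∪ K1) ⊕ (K2 ∪ K1). -/

import Mathlib

open SimpleGraph

/-- The disjoint union `G ∪ H` of two vertex-disjoint graphs. -/
def gUnion {α β : Type*} (G : SimpleGraph α) (H : SimpleGraph β) : SimpleGraph (α ⊕ β) where
  Adj x y :=
    match x, y with
    | Sum.inl a, Sum.inl b => G.Adj a b
    | Sum.inr a, Sum.inr b => H.Adj a b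
    | _, _ => False
  symm := by constructor; rintro (a | a) (b | b) h
             · exact G.adj_symm h
             · exact h.elim
             · exact h.elim
             · exact H.adj_symm h
  loopless := by constructor; rintro (a | a) h
                 · exact G.irrefl h
                 · exact H.irrefl h

/-- The join `G ⊕ H` of two vertex-disjoint graphs: disjoint union plus all edges across. -/
def gJoin {α β : Type*} (G : SimpleGraph α) (H : SimpleGraph β) : SimpleGraph (α ⊕ β) where
  Adj x y :=
    match x, y with
    | Sum.inl a, Sum.inl b => G.Adj a b
    | Sum.inr a, Sum.inr b => H.Adj a b
    | _, _ => True
  symm := by constructor; rintro (a | a) (b | b) h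
             · exact G.adj_symm h
             · trivial
             · trivial
             · exact H.adj_symm h
  loopless := by constructor; rintro (a | a) h
                 · exact G.irrefl h
                 · exact H.irrefl h

/-- The complete graph `Kₙ`. -/
def KG (n : ℕ) : SimpleGraph (Fin n) := ⊤

/-- The edgeless graph `nK₁` on `n` vertices. -/
def EG (n : ℕ) : SimpleGraph (Fin n) := ⊥

/-- `G` contains `H`, i.e. `H` is isomorphic to an induced subgraph of `G`. -/
def Contains {α β : Type*} (G : SimpleGraph α) (H : SimpleGraph β) : Prop :=
  Nonempty (H ↪g G)

/-- A cograph is a `P₄`-free graph. -/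
def IsCograph {α : Type*} (G : SimpleGraph α) : Prop :=
  ¬ Contains G (pathGraph 4)

/-- `G` is partitionable: its vertex set splits into a part inducing a triangle-free
graph and a part inducing a `P₃`-free graph. -/
def Partitionable {α : Type*} (G : SimpleGraph α) : Prop :=
  ∃ A : Set α, (G.induce A).CliqueFree 3 ∧ ¬ Contains (G.induce Aᶜ) (pathGraph 3)

/-- `G` is monopolar: its vertex set splits into an independent set and a part
inducing a `P₃`-free graph. -/
def Monopolar {α : Type*} (G : SimpleGraph α) : Prop :=
  ∃ A : Set α, (G.induce A).CliqueFree 2 ∧ ¬ Contains (G.induce Aᶜ) (pathGraph 3)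

/-- `G` is (1,2)-partitionable: its vertex set can be partitioned into at most one
clique and at most two independent sets (equivalently, covered by them). -/
def OneTwoPartitionable {α : Type*} (G : SimpleGraph α) : Prop :=
  ∃ C S₁ S₂ : Set α, C ∪ S₁ ∪ S₂ = Set.univ ∧ G.IsClique C ∧
    (G.induce S₁).CliqueFree 2 ∧ (G.induce S₂).CliqueFree 2

/-- A threshold graph is a `(2K₂, C₄, P₄)`-free graph. -/
def IsThreshold {α : Type*} (G : SimpleGraph α) : Prop :=
  ¬ Contains G (gUnion (KG 2) (KG 2)) ∧ ¬ Contains G (cycleGraph 4) ∧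
    ¬ Contains G (pathGraph 4)

/-- The diamond `K₂ ⊕ 2K₁`. -/
def diamond := gJoin (KG 2) (EG 2)

/-- The paw `K₁ ⊕ (K₁ ∪ K₂)`. -/
def paw := gJoin (KG 1) (gUnion (KG 1) (KG 2))

/-- The butterfly `K₁ ⊕ 2K₂`. -/
def butterfly := gJoin (KG 1) (gUnion (KG 2) (KG 2))

def twoK2 := gUnion (KG 2) (KG 2)

def twoK3 := gUnion (KG 3) (KG 3)

def K2uK1 := gUnion (KG 2) (KG 1)


def J1 := gJoin (cycleGraph 4) (KG 1)
def J2 := gJoin (KG 1) (gUnion (pathGraph 3) (KG 2))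
def J3 := gJoin (KG 2) twoK2
def J4 := gJoin K2uK1 K2uK1
section Basics
universe u v w
variable {α : Type u} {β : Type v} {γ : Type w}

lemma Contains.trans {G : SimpleGraph α} {H : SimpleGraph β} {K : SimpleGraph γ}
    (h1 : Contains G H) (h2 : Contains H K) : Contains G K := by
  obtain ⟨f⟩ := h1; obtain ⟨g⟩ := h2; exact ⟨f.comp g⟩

lemma contains_of_induce {G : SimpleGraph α} {s : Set α} {H : SimpleGraph β}
    (h : Contains (G.induce s) H) : Contains G H := by
  obtain ⟨f⟩ := h; exact ⟨(SimpleGraph.Embedding.induce s).comp f⟩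

lemma IsCograph.induce {G : SimpleGraph α} (h : IsCograph G) (s : Set α) :
    IsCograph (G.induce s) := fun hc => h (contains_of_induce hc)

lemma containsP3_iff {G : SimpleGraph α} :
    Contains G (pathGraph 3) ↔ ∃ a b c, a ≠ c ∧ G.Adj a b ∧ G.Adj b c ∧ ¬ G.Adj a c := by
  constructor
  · rintro ⟨f⟩
    refine ⟨f 0, f 1, f 2, fun h => ?_, ?_, ?_, fun h => ?_⟩
    · have := f.injective h; exact absurd this (by decide)
    · exact f.map_rel_iff.2 (by simp [pathGraph_adj])
    · exact f.map_rel_iff.2 (by simp [pathGraph_adj])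
    · have := f.map_rel_iff.1 h; simp [pathGraph_adj] at this
  · rintro ⟨a, b, c, hac, hab, hbc, hnac⟩
    have hab' := hab.ne
    have hbc' := hbc.ne
    refine ⟨⟨⟨![a,b,c], ?_⟩, ?_⟩⟩
    · intro x y hxy
      fin_cases x <;> fin_cases y <;> simp_all [Matrix.cons_val_zero, Matrix.cons_val_one] <;> omega
    · intro x y
      fin_cases x <;> fin_cases y <;>
        simp_all [pathGraph_adj, SimpleGraph.adj_comm, DFunLike.coe] <;> omega
lemma containsP4_of {G : SimpleGraph α} {a b c d : α}
    (hab : G.Adj a b) (hbc : G.Adj b c) (hcd : G.Adj c d)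
    (hac : ¬ G.Adj a c) (had : ¬ G.Adj a d) (hbd : ¬ G.Adj b d)
    (h1 : a ≠ c) (h2 : a ≠ d) (h3 : b ≠ d) : Contains G (pathGraph 4) := by
  have hab' := hab.ne; have hbc' := hbc.ne; have hcd' := hcd.ne
  refine ⟨⟨⟨![a,b,c,d], ?_⟩, ?_⟩⟩
  · intro x y hxy
    fin_cases x <;> fin_cases y <;> simp_all
  · intro x y
    fin_cases x <;> fin_cases y <;> simp_all [pathGraph_adj, SimpleGraph.adj_comm, DFunLike.coe] <;> decide

lemma reach_closed {G : SimpleGraph α} {U : Set α}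
    (hU : ∀ a b, G.Adj a b → a ∈ U → b ∈ U) {x y : α}
    (h : G.Reachable x y) (hx : x ∈ U) : y ∈ U := by
  obtain ⟨p⟩ := h
  induction p with
  | nil => exact hx
  | cons hadj _ ih => exact ih (hU _ _ hadj hx)

lemma exists_break {G : SimpleGraph α} {P : α → Prop} {x y : α}
    (h : G.Reachable x y) (hx : P x) (hy : ¬ P y) :
    ∃ a b, G.Adj a b ∧ P a ∧ ¬ P b := by
  obtain ⟨p⟩ := h
  induction p with
  | nil => exact absurd hx hy
  | @cons u v w hadj p ih =>
    by_cases hv : P v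
    · exact ih hv hy
    · exact ⟨u, v, hadj, hx, hv⟩

/-- In the complement, non-reachability implies adjacency (for distinct vertices). -/
lemma adj_of_not_coreach {G : SimpleGraph α} {u w : α}
    (h : ¬ Gᶜ.Reachable u w) : G.Adj u w := by
  by_contra hadj
  have hne : u ≠ w := fun he => h (he ▸ Reachable.refl u)
  exact h (SimpleGraph.Adj.reachable (by simp [SimpleGraph.compl_adj, hne, hadj]))
lemma exists_adj_of_reachable_ne {G : SimpleGraph α} {u w : α}
    (h : G.Reachable u w) (hne : u ≠ w) : ∃ y, G.Adj u y := by
  obtain ⟨p⟩ := h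
  cases p with
  | nil => exact absurd rfl hne
  | cons hadj _ => exact ⟨_, hadj⟩

lemma seinsche : ∀ (n : ℕ) {α : Type u} [Fintype α] (G : SimpleGraph α),
    Fintype.card α ≤ n → IsCograph G → G.Preconnected → 2 ≤ Fintype.card α →
    ∃ u w, ¬ Gᶜ.Reachable u w := by
  intro n
  induction n with
  | zero => intro α _ G hc _ _ h2; omega
  | succ n IH =>
    intro α inst G hcard hcog hpre hcard2
    classical
    have hnt : Nontrivial α := Fintype.one_lt_card_iff_nontrivial.1 hcard2
    obtain ⟨v⟩ : Nonempty α := inferInstance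
    set s : Set α := {x | x ≠ v} with hs
    set H : SimpleGraph ↥s := G.induce s with hH
    have hGadj_of_Hadj : ∀ {a b : ↥s}, H.Adj a b → G.Adj ↑a ↑b := by
      intro a b h; exact h
    have hHadj_of_Gadj : ∀ {a b : ↥s}, G.Adj ↑a ↑b → H.Adj a b := by
      intro a b h; exact h
    set X : Set ↥s := {x | ¬ G.Adj v ↑x} with hX
    set U : Set α := {z | z = v ∨ ∃ hz : z ≠ v, ∃ x ∈ X, Hᶜ.Reachable ⟨z, hz⟩ x} with hU
    have hvU : v ∈ U := Or.inl rfl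
    have hUclosed : ∀ a b, Gᶜ.Adj a b → a ∈ U → b ∈ U := by
      intro a b hab haU
      obtain ⟨hne, hnadj⟩ := hab
      rcases haU with rfl | ⟨ha, x, hx, hreach⟩
      · refine Or.inr ⟨Ne.symm hne, ⟨b, Ne.symm hne⟩, hnadj, Reachable.refl _⟩
      · by_cases hbv : b = v
        · exact Or.inl hbv
        · refine Or.inr ⟨hbv, x, hx, Reachable.trans ?_ hreach⟩
          refine (SimpleGraph.Adj.reachable ?_)
          refine ⟨?_, ?_⟩
          · intro hEq; exact hne (congrArg Subtype.val hEq).symm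
          · intro hadj; exact hnadj ((hGadj_of_Hadj hadj).symm)
    -- it suffices to find a vertex outside U
    suffices hsuff : ∃ a, a ∉ U by
      obtain ⟨a, ha⟩ := hsuff
      exact ⟨v, a, fun h => ha (reach_closed hUclosed h hvU)⟩
    by_cases hXe : X = ∅
    · obtain ⟨u, hu⟩ := exists_ne v
      refine ⟨u, ?_⟩
      rintro (rfl | ⟨hz, x, hx, _⟩)
      · exact hu rfl
      · rw [hXe] at hx; exact hx
    · obtain ⟨x0, hx0⟩ := Set.nonempty_iff_ne_empty.2 hXe
      by_cases hHp : H.Preconnected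
      · -- H connected: use IH
        have hcards : Fintype.card ↥s + 1 = Fintype.card α := by
          have : Fintype.card {x : α // x = v} = 1 := Fintype.card_subtype_eq v
          have h2 : Fintype.card {x : α // ¬ x = v} = Fintype.card α - 1 := by
            rw [Fintype.card_subtype_compl, this]
          have h3 : Fintype.card ↥s = Fintype.card α - 1 := h2
          omega
        have hcards2 : 2 ≤ Fintype.card ↥s := by
          by_contra hlt
          -- card s = 1, so x0 is the unique vertex ≠ v, and v has no neighbor
          push_neg at hlt
          have hone : Fintype.card ↥s = 1 := by
            have : x0 ∈ (Set.univ : Set ↥s) := trivial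
            have hpos : 0 < Fintype.card ↥s := Fintype.card_pos_iff.2 ⟨x0⟩
            omega
          obtain ⟨y, hy⟩ := exists_adj_of_reachable_ne (hpre v ↑x0) (Ne.symm x0.2)
          have hyv : y ≠ v := fun h => G.loopless.irrefl v (h ▸ hy)
          have : (⟨y, hyv⟩ : ↥s) = x0 := by
            have := Fintype.card_le_one_iff.1 (le_of_eq hone)
            exact this _ _
          apply hx0
          rw [← this]
          exact hy
        obtain ⟨p, q, hpq⟩ := IH H (by omega) (hcog.induce s) hHp hcards2
        by_cases h2a : ∀ x ∈ X, Hᶜ.Reachable x x0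
        · -- X inside one co-component
          have : ¬ Hᶜ.Reachable p x0 ∨ ¬ Hᶜ.Reachable q x0 := by
            by_contra hcon
            push_neg at hcon
            exact hpq (hcon.1.trans hcon.2.symm)
          obtain ⟨r, hr⟩ : ∃ r : ↥s, ¬ Hᶜ.Reachable r x0 := by
            rcases this with h | h
            · exact ⟨p, h⟩
            · exact ⟨q, h⟩
          refine ⟨↑r, ?_⟩
          rintro (hrv | ⟨hz, x, hx, hreach⟩)
          · exact r.2 hrv
          · have : (⟨↑r, hz⟩ : ↥s) = r := Subtype.ext rfl
            rw [this] at hreach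
            exact hr (hreach.trans (h2a x hx))
        · -- X spans two co-components
          push_neg at h2a
          obtain ⟨y0, hy0X, hy0⟩ := h2a
          -- dichotomy: a neighbor of v is adjacent to both elements of a co-separated pair in X
          have dich : ∀ b c : ↥s, b ∈ X → c ∈ X → ¬ Hᶜ.Reachable b c →
              ∀ a : ↥s, G.Adj v ↑a → G.Adj ↑a ↑b := by
            intro b c hbX hcX hbc a hva
            have hGbc : G.Adj ↑b ↑c := hGadj_of_Hadj (adj_of_not_coreach hbc)
            by_contra hab
            by_cases hac : G.Adj ↑a ↑c
            · -- P4 : b - c - a - v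
              refine hcog (containsP4_of (G := G) (a := ↑b) (b := ↑c) (c := ↑a) (d := v)
                hGbc hac.symm hva.symm (fun h => hab h.symm) (fun h => hbX h.symm)
                (fun h => hcX h.symm) (fun h => hbX (by rw [h]; exact hva))
                (fun h => Subtype.prop b h) (fun h => Subtype.prop c h))
            · -- a co-adjacent to both b and c
              have h1 : Hᶜ.Adj b a := by
                refine ⟨?_, fun h => hab (hGadj_of_Hadj h).symm⟩
                intro h; rw [← h] at hva; exact hbX hva
              have h2 : Hᶜ.Adj a c := by
                refine ⟨?_, fun h => hac (hGadj_of_Hadj h)⟩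
                intro h; rw [h] at hva; exact hcX hva
              exact hbc (h1.reachable.trans h2.reachable)
          -- X is closed under co-reachability
          have hXclosed : ∀ x ∈ X, ∀ z : ↥s, Hᶜ.Reachable x z → z ∈ X := by
            intro x hxX z hreach
            obtain ⟨w, hwX, hwnr⟩ : ∃ w ∈ X, ¬ Hᶜ.Reachable x w := by
              by_cases h1 : Hᶜ.Reachable x x0
              · exact ⟨y0, hy0X, fun h => hy0 (h.symm.trans h1)⟩
              · exact ⟨x0, hx0, h1⟩
            have : z ∈ {z : ↥s | z ∈ X ∧ ¬ Hᶜ.Reachable z w} := by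
              refine reach_closed (G := Hᶜ) (U := {z : ↥s | z ∈ X ∧ ¬ Hᶜ.Reachable z w}) ?_ hreach ⟨hxX, hwnr⟩
              intro a b hab ⟨haX, hanr⟩
              constructor
              · by_contra hbX
                have hbv : G.Adj v ↑b := not_not.1 hbX
                have := dich a w haX hwX hanr b hbv
                exact hab.2 (hHadj_of_Gadj this.symm)
              · intro h; exact hanr (hab.reachable.trans h)
            exact this.1
          -- v has a neighbor w; w ∉ U
          obtain ⟨u0, hu0⟩ := exists_ne v
          obtain ⟨y, hy⟩ := exists_adj_of_reachable_ne (hpre v u0) (Ne.symm hu0)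
          have hyv : y ≠ v := fun h => G.loopless.irrefl v (h ▸ hy)
          refine ⟨y, ?_⟩
          rintro (hrv | ⟨hz, x, hx, hreach⟩)
          · exact hyv hrv
          · have : (⟨y, hz⟩ : ↥s) ∈ X := hXclosed x hx _ hreach.symm
            exact this hy
      · -- H disconnected : find P4
        exfalso
        unfold SimpleGraph.Preconnected at hHp
        push_neg at hHp
        obtain ⟨p, q, hpq⟩ := hHp
        -- v has a neighbor in every component of H
        have hnbr : ∀ b : ↥s, ∃ y : ↥s, G.Adj v ↑y ∧ H.Reachable y b := by
          intro b
          by_contra hno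
          push_neg at hno
          set W : Set α := {z | z = v ∨ ∃ hz : z ≠ v, ¬ H.Reachable ⟨z, hz⟩ b} with hW
          have hWcl : ∀ a c, G.Adj a c → a ∈ W → c ∈ W := by
            intro a c hac haW
            have hcv : c = v ∨ c ≠ v := em _
            rcases hcv with rfl | hcv
            · exact Or.inl rfl
            rcases haW with rfl | ⟨ha, hnr⟩
            · refine Or.inr ⟨hcv, fun hr => ?_⟩
              exact (hno ⟨c, hcv⟩ hac) hr
            · refine Or.inr ⟨hcv, fun hr => ?_⟩
              have : H.Adj ⟨a, ha⟩ ⟨c, hcv⟩ := hHadj_of_Gadj hac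
              exact hnr (this.reachable.trans hr)
          have : ↑b ∈ W := reach_closed hWcl (hpre v ↑b) (Or.inl rfl)
          rcases this with hbv | ⟨hb, hnr⟩
          · exact b.2 hbv
          · exact hnr (by rw [show (⟨↑b, hb⟩ : ↥s) = b from Subtype.ext rfl])
        obtain ⟨y0, hy0adj, hy0r⟩ := hnbr x0
        obtain ⟨a', b', hadj', hva', hvb'⟩ :=
          exists_break (P := fun z : ↥s => G.Adj v ↑z) hy0r hy0adj hx0
        obtain ⟨r, hr⟩ : ∃ r : ↥s, ¬ H.Reachable r a' := by
          by_cases h1 : H.Reachable p a'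
          · exact ⟨q, fun h => hpq (h1.trans h.symm)⟩
          · exact ⟨p, h1⟩
        obtain ⟨c, hcadj, hcr⟩ := hnbr r
        have hcb' : ¬ H.Reachable c b' := by
          intro h
          exact hr (hcr.symm.trans (h.trans hadj'.reachable.symm))
        have hca' : ¬ H.Reachable c a' := fun h => hr (hcr.symm.trans h)
        -- P4 : c - v - a' - b'
        refine hcog (containsP4_of (G := G) (a := ↑c) (b := v) (c := ↑a') (d := ↑b')
          hcadj.symm hva' (hGadj_of_Hadj hadj') ?_ ?_ hvb' ?_ ?_ ?_)
        · intro h; exact hca' (hHadj_of_Gadj h).reachable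
        · intro h; exact hcb' (hHadj_of_Gadj h).reachable
        · intro h
          exact hca' (by rw [show c = a' from Subtype.ext h])
        · intro h
          exact hcb' (by rw [show c = b' from Subtype.ext h])
        · intro h
          exact b'.2 h.symm
def No2K2 {α : Type u} (G : SimpleGraph α) : Prop :=
  ¬ ∃ x y z w, G.Adj x y ∧ G.Adj z w ∧ ¬G.Adj x z ∧ ¬G.Adj x w ∧ ¬G.Adj y z ∧ ¬G.Adj y w ∧
    x ≠ z ∧ x ≠ w ∧ y ≠ z ∧ y ≠ w

def NoC4 {α : Type u} (G : SimpleGraph α) : Prop :=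
  ¬ ∃ a b c d, G.Adj a b ∧ G.Adj b c ∧ G.Adj c d ∧ G.Adj d a ∧ ¬G.Adj a c ∧ ¬G.Adj b d ∧
    a ≠ c ∧ b ≠ d

lemma No2K2.induce {G : SimpleGraph α} (h : No2K2 G) (s : Set α) : No2K2 (G.induce s) := by
  rintro ⟨x, y, z, w, h1, h2, h3, h4, h5, h6, n1, n2, n3, n4⟩
  exact h ⟨↑x, ↑y, ↑z, ↑w, h1, h2, h3, h4, h5, h6,
    fun e => n1 (Subtype.ext e), fun e => n2 (Subtype.ext e),
    fun e => n3 (Subtype.ext e), fun e => n4 (Subtype.ext e)⟩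

lemma NoC4.induce {G : SimpleGraph α} (h : NoC4 G) (s : Set α) : NoC4 (G.induce s) := by
  rintro ⟨x, y, z, w, h1, h2, h3, h4, h5, h6, n1, n2⟩
  exact h ⟨↑x, ↑y, ↑z, ↑w, h1, h2, h3, h4, h5, h6,
    fun e => n1 (Subtype.ext e), fun e => n2 (Subtype.ext e)⟩

lemma induce_reach_transfer {G : SimpleGraph α} {x : α} {a b : α}
    (h : G.Reachable a b) (ha : a ∈ {v | G.Reachable x v}) (hb : b ∈ {v | G.Reachable x v}) :
    (G.induce {v | G.Reachable x v}).Reachable ⟨a, ha⟩ ⟨b, hb⟩ := by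
  obtain ⟨p⟩ := h
  induction p with
  | nil => rfl
  | @cons u v' w hadj p ih =>
    have hv' : v' ∈ {v | G.Reachable x v} := ha.trans hadj.reachable
    have : (G.induce {v | G.Reachable x v}).Adj ⟨u, ha⟩ ⟨v', hv'⟩ := hadj
    exact this.reachable.trans (ih hv' hb)

lemma induce_reachSet_preconnected (G : SimpleGraph α) (x : α) :
    (G.induce {v | G.Reachable x v}).Preconnected := by
  rintro ⟨a, ha⟩ ⟨b, hb⟩
  exact induce_reach_transfer (ha.symm.trans hb) ha hb

lemma threshold_split : ∀ (n : ℕ) {α : Type u} [Fintype α] (G : SimpleGraph α),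
    Fintype.card α ≤ n → IsCograph G → No2K2 G → NoC4 G →
    ∃ K : Set α, (∀ x ∈ K, ∀ y ∈ K, x ≠ y → G.Adj x y) ∧ (∀ x ∉ K, ∀ y ∉ K, ¬ G.Adj x y) := by
  intro n
  induction n with
  | zero =>
    intro α _ G hc _ _ _
    have : IsEmpty α := Fintype.card_eq_zero_iff.1 (le_antisymm hc (Nat.zero_le _))
    exact ⟨∅, fun x _ => (this.false x).elim, fun x _ => (this.false x).elim⟩
  | succ n IH =>
    intro α inst G hcard hcog h2K2 hC4
    classical
    by_cases hedge : ∃ x y, G.Adj x y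
    · obtain ⟨x0, y0, hxy0⟩ := hedge
      by_cases hcomplete : ∀ a b : α, a ≠ b → G.Adj a b
      · exact ⟨Set.univ, fun x _ y _ h => hcomplete x y h, fun x hx => absurd trivial hx⟩
      push_neg at hcomplete
      obtain ⟨a0, b0, hab0, hnab0⟩ := hcomplete
      by_cases hpre : G.Preconnected
      · have hcard2 : 2 ≤ Fintype.card α :=
          Fintype.one_lt_card_iff_nontrivial.2 ⟨⟨x0, y0, hxy0.ne⟩⟩
        obtain ⟨u0, w0, hnr⟩ := seinsche (Fintype.card α) G le_rfl hcog hpre hcard2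
        have hcoab0 : Gᶜ.Adj a0 b0 := ⟨hab0, hnab0⟩
        have key : ∀ a b : α, a ≠ b → ¬G.Adj a b → Gᶜ.Reachable a a0 := by
          intro a b hne hnadj
          by_contra ha
          have h1 : G.Adj a a0 := adj_of_not_coreach ha
          have h2 : G.Adj a b0 := by
            refine adj_of_not_coreach fun h => ha (h.trans hcoab0.symm.reachable)
          have hcoba : Gᶜ.Adj b a := ⟨Ne.symm hne, fun h => hnadj h.symm⟩
          have h3 : G.Adj b a0 := by
            refine adj_of_not_coreach fun h => ha (hcoba.symm.reachable.trans h)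
          have h4 : G.Adj b b0 := by
            refine adj_of_not_coreach fun h =>
              ha (hcoba.symm.reachable.trans (h.trans hcoab0.symm.reachable))
          exact hC4 ⟨a, a0, b, b0, h1, h3.symm, h4, h2.symm, hnadj, hnab0, hne, hab0⟩
        set s : Set α := {z | Gᶜ.Reachable z a0} with hsdef
        have hq : ∃ q, q ∉ s := by
          by_contra hall
          push_neg at hall
          exact hnr ((hall u0).trans (hall w0).symm)
        obtain ⟨q, hq⟩ := hq
        have hcards : Fintype.card ↥s ≤ n := by
          have h1 := Fintype.card_subtype_lt (p := fun z => z ∈ s) (x := q) hq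
          have h2 : Fintype.card {x // (fun z => z ∈ s) x} = Fintype.card ↥s :=
            Fintype.card_congr (Equiv.refl _)
          have h3 : Fintype.card ↥s < Fintype.card α := by convert h1
          omega
        obtain ⟨K1, hK1c, hK1i⟩ :=
          IH (G.induce s) hcards (hcog.induce s) (h2K2.induce s) (hC4.induce s)
        refine ⟨(Subtype.val '' K1) ∪ sᶜ, ?_, ?_⟩
        · rintro x hx y hy hne
          by_contra hnadj
          have hxs : x ∈ s ∧ y ∈ s := ⟨key x y hne hnadj, key y x (Ne.symm hne) (fun h => hnadj h.symm)⟩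
          rcases hx with ⟨x', hx', rfl⟩ | hx
          · rcases hy with ⟨y', hy', rfl⟩ | hy
            · exact hnadj (hK1c x' hx' y' hy' (fun e => hne (congrArg Subtype.val e)))
            · exact hy hxs.2
          · exact hx hxs.1
        · intro x hx y hy hadj
          simp only [Set.mem_union, not_or, Set.mem_compl_iff, not_not] at hx hy
          obtain ⟨hxK, hxs⟩ := hx
          obtain ⟨hyK, hys⟩ := hy
          refine hK1i ⟨x, hxs⟩ ?_ ⟨y, hys⟩ ?_ hadj
          · intro h; exact hxK ⟨⟨x, hxs⟩, h, rfl⟩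
          · intro h; exact hyK ⟨⟨y, hys⟩, h, rfl⟩
      · -- G disconnected
        have hpre' : ∃ p q : α, ¬ G.Reachable p q := by
          unfold SimpleGraph.Preconnected at hpre; push_neg at hpre; exact hpre
        obtain ⟨p, q, hpq⟩ := hpre'
        set s : Set α := {z | G.Reachable x0 z} with hsdef
        have hclosed : ∀ z w, G.Adj z w → z ∈ s → w ∈ s := fun z w hadj hz => hz.trans hadj.reachable
        have hnoedge : ∀ z w, z ∉ s → ¬ G.Adj z w := by
          intro z w hz hadj
          have hw : w ∉ s := fun hw => hz (hw.trans hadj.reachable.symm)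
          have hx0 : x0 ∈ s := Reachable.refl x0
          have hy0 : y0 ∈ s := hxy0.reachable
          refine h2K2 ⟨x0, y0, z, w, hxy0, hadj, ?_, ?_, ?_, ?_, ?_, ?_, ?_, ?_⟩
          · exact fun h => hz (hclosed x0 z h hx0)
          · exact fun h => hw (hclosed x0 w h hx0)
          · exact fun h => hz (hclosed y0 z h hy0)
          · exact fun h => hw (hclosed y0 w h hy0)
          · exact fun e => hz (e ▸ hx0)
          · exact fun e => hw (e ▸ hx0)
          · exact fun e => hz (e ▸ hy0)
          · exact fun e => hw (e ▸ hy0)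
        have hq' : ∃ r, r ∉ s := by
          by_contra hall
          push_neg at hall
          exact hpq ((hall p).symm.trans (hall q))
        obtain ⟨r, hr⟩ := hq'
        have hcards : Fintype.card ↥s ≤ n := by
          have h1 := Fintype.card_subtype_lt (p := fun z => z ∈ s) (x := r) hr
          have h2 : Fintype.card {x // (fun z => z ∈ s) x} = Fintype.card ↥s :=
            Fintype.card_congr (Equiv.refl _)
          have h3 : Fintype.card ↥s < Fintype.card α := by convert h1
          omega
        obtain ⟨K1, hK1c, hK1i⟩ :=
          IH (G.induce s) hcards (hcog.induce s) (h2K2.induce s) (hC4.induce s)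
        refine ⟨Subtype.val '' K1, ?_, ?_⟩
        · rintro x ⟨x', hx', rfl⟩ y ⟨y', hy', rfl⟩ hne
          exact hK1c x' hx' y' hy' (fun e => hne (congrArg Subtype.val e))
        · intro x hx y hy hadj
          by_cases hxs : x ∈ s
          · have hys : y ∈ s := hclosed x y hadj hxs
            refine hK1i ⟨x, hxs⟩ ?_ ⟨y, hys⟩ ?_ hadj
            · intro h; exact hx ⟨⟨x, hxs⟩, h, rfl⟩
            · intro h; exact hy ⟨⟨y, hys⟩, h, rfl⟩
          · exact hnoedge x y hxs hadj
    · push_neg at hedge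
      exact ⟨∅, fun x hx => absurd hx (Set.notMem_empty x),
        fun x _ y _ hadj => hedge x y hadj⟩

lemma common_nbr_of_2K2 {α : Type u} [Fintype α] {G : SimpleGraph α} (hcog : IsCograph G)
    {x y z w : α} (hxy : G.Adj x y) (hzw : G.Adj z w)
    (hxz : ¬G.Adj x z) (hxw : ¬G.Adj x w) (hyz : ¬G.Adj y z) (hyw : ¬G.Adj y w)
    (n1 : x ≠ z) (n2 : x ≠ w) (n3 : y ≠ z) (n4 : y ≠ w)
    (hreach : G.Reachable x z) :
    ∃ t, t ≠ x ∧ t ≠ y ∧ t ≠ z ∧ t ≠ w ∧ G.Adj t x ∧ G.Adj t y ∧ G.Adj t z ∧ G.Adj t w := by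
  classical
  set s : Set α := {v | G.Reachable x v} with hsdef
  have hx : x ∈ s := Reachable.refl x
  have hy : y ∈ s := hxy.reachable
  have hz : z ∈ s := hreach
  have hw : w ∈ s := hreach.trans hzw.reachable
  set H : SimpleGraph ↥s := G.induce s with hH
  have hpre : H.Preconnected := induce_reachSet_preconnected G x
  have hcard2 : 2 ≤ Fintype.card ↥s :=
    Fintype.one_lt_card_iff_nontrivial.2
      ⟨⟨⟨x, hx⟩, ⟨y, hy⟩, fun e => hxy.ne (congrArg Subtype.val e)⟩⟩
  obtain ⟨p, q, hpq⟩ := seinsche (Fintype.card ↥s) H le_rfl (hcog.induce s) hpre hcard2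
  -- x, y, z, w are mutually co-reachable in H
  have cxz : Hᶜ.Adj ⟨x, hx⟩ ⟨z, hz⟩ := ⟨fun e => n1 (congrArg Subtype.val e), hxz⟩
  have cxw : Hᶜ.Adj ⟨x, hx⟩ ⟨w, hw⟩ := ⟨fun e => n2 (congrArg Subtype.val e), hxw⟩
  have cyz : Hᶜ.Adj ⟨y, hy⟩ ⟨z, hz⟩ := ⟨fun e => n3 (congrArg Subtype.val e), hyz⟩
  have cyw : Hᶜ.Adj ⟨y, hy⟩ ⟨w, hw⟩ := ⟨fun e => n4 (congrArg Subtype.val e), hyw⟩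
  obtain ⟨t, ht⟩ : ∃ t : ↥s, ¬ Hᶜ.Reachable t ⟨x, hx⟩ := by
    by_cases h1 : Hᶜ.Reachable p ⟨x, hx⟩
    · exact ⟨q, fun h => hpq (h1.trans h.symm)⟩
    · exact ⟨p, h1⟩
  have htx : ¬ Hᶜ.Reachable t ⟨x, hx⟩ := ht
  have htz : ¬ Hᶜ.Reachable t ⟨z, hz⟩ := fun h => htx (h.trans cxz.symm.reachable)
  have htw : ¬ Hᶜ.Reachable t ⟨w, hw⟩ := fun h => htx (h.trans (cxw.symm.reachable))
  have hty : ¬ Hᶜ.Reachable t ⟨y, hy⟩ := fun h => htz (h.trans cyz.reachable)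
  refine ⟨↑t, ?_, ?_, ?_, ?_, ?_, ?_, ?_, ?_⟩
  · exact fun e => htx (by rw [show t = (⟨x, hx⟩ : ↥s) from Subtype.ext e])
  · exact fun e => hty (by rw [show t = (⟨y, hy⟩ : ↥s) from Subtype.ext e])
  · exact fun e => htz (by rw [show t = (⟨z, hz⟩ : ↥s) from Subtype.ext e])
  · exact fun e => htw (by rw [show t = (⟨w, hw⟩ : ↥s) from Subtype.ext e])
  · exact adj_of_not_coreach (G := H) htx
  · exact adj_of_not_coreach (G := H) hty
  · exact adj_of_not_coreach (G := H) htz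
  · exact adj_of_not_coreach (G := H) htw
instance pathGraphAdjDec {n : ℕ} : DecidableRel (pathGraph n).Adj :=
  fun a b => decidable_of_iff _ (pathGraph_adj).symm

@[simp] lemma gJoin_adj_ll {G : SimpleGraph α} {H : SimpleGraph β} {a b : α} :
    (gJoin G H).Adj (Sum.inl a) (Sum.inl b) ↔ G.Adj a b := Iff.rfl
@[simp] lemma gJoin_adj_lr {G : SimpleGraph α} {H : SimpleGraph β} {a : α} {b : β} :
    (gJoin G H).Adj (Sum.inl a) (Sum.inr b) ↔ True := Iff.rfl
@[simp] lemma gJoin_adj_rl {G : SimpleGraph α} {H : SimpleGraph β} {a : β} {b : α} :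
    (gJoin G H).Adj (Sum.inr a) (Sum.inl b) ↔ True := Iff.rfl
@[simp] lemma gJoin_adj_rr {G : SimpleGraph α} {H : SimpleGraph β} {a b : β} :
    (gJoin G H).Adj (Sum.inr a) (Sum.inr b) ↔ H.Adj a b := Iff.rfl
@[simp] lemma gUnion_adj_ll {G : SimpleGraph α} {H : SimpleGraph β} {a b : α} :
    (gUnion G H).Adj (Sum.inl a) (Sum.inl b) ↔ G.Adj a b := Iff.rfl
@[simp] lemma gUnion_adj_lr {G : SimpleGraph α} {H : SimpleGraph β} {a : α} {b : β} :
    (gUnion G H).Adj (Sum.inl a) (Sum.inr b) ↔ False := Iff.rfl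
@[simp] lemma gUnion_adj_rl {G : SimpleGraph α} {H : SimpleGraph β} {a : β} {b : α} :
    (gUnion G H).Adj (Sum.inr a) (Sum.inl b) ↔ False := Iff.rfl
@[simp] lemma gUnion_adj_rr {G : SimpleGraph α} {H : SimpleGraph β} {a b : β} :
    (gUnion G H).Adj (Sum.inr a) (Sum.inr b) ↔ H.Adj a b := Iff.rfl

lemma containsJ1_of {G : SimpleGraph α} {a b c d e : α}
    (hab : G.Adj a b) (hbc : G.Adj b c) (hcd : G.Adj c d) (hda : G.Adj d a)
    (hac : ¬G.Adj a c) (hbd : ¬G.Adj b d) (n1 : a ≠ c) (n2 : b ≠ d)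
    (hea : G.Adj e a) (heb : G.Adj e b) (hec : G.Adj e c) (hed : G.Adj e d) :
    Contains G J1 := by
  have q1 := hab.ne; have q2 := hbc.ne; have q3 := hcd.ne; have q4 := hda.ne
  have q5 := hea.ne; have q6 := heb.ne; have q7 := hec.ne; have q8 := hed.ne
  have s1 := hab.symm; have s2 := hbc.symm; have s3 := hcd.symm; have s4 := hda.symm
  have s5 := hea.symm; have s6 := heb.symm; have s7 := hec.symm; have s8 := hed.symm
  have m1 : ¬G.Adj c a := fun h => hac h.symm
  have m2 : ¬G.Adj d b := fun h => hbd h.symm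
  have t1 : (cycleGraph 4).Adj 0 1 := by decide
  have t2 : (cycleGraph 4).Adj 1 2 := by decide
  have t3 : (cycleGraph 4).Adj 2 3 := by decide
  have t4 : (cycleGraph 4).Adj 0 3 := by decide
  have t5 : (cycleGraph 4).Adj 3 0 := by decide
  have t6 : (cycleGraph 4).Adj 1 0 := by decide
  have t7 : (cycleGraph 4).Adj 2 1 := by decide
  have t8 : (cycleGraph 4).Adj 3 2 := by decide
  have t9 : ¬(cycleGraph 4).Adj 0 2 := by decide
  have t10 : ¬(cycleGraph 4).Adj 1 3 := by decide
  have t11 : ¬(cycleGraph 4).Adj 2 0 := by decide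
  have t12 : ¬(cycleGraph 4).Adj 3 1 := by decide
  refine ⟨⟨⟨Sum.elim ![a,b,c,d] ![e], ?_⟩, ?_⟩⟩
  · rintro (i|i) (j|j) h <;> fin_cases i <;> fin_cases j <;> simp_all
  · rintro (i|i) (j|j) <;> fin_cases i <;> fin_cases j <;>
      simp_all [J1, DFunLike.coe] <;> decide

set_option maxHeartbeats 1000000 in
lemma containsJ2_of {G : SimpleGraph α} {p1 p2 p3 k1 k2 v : α}
    (h12 : G.Adj p1 p2) (h23 : G.Adj p2 p3) (h13 : ¬G.Adj p1 p3) (n13 : p1 ≠ p3)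
    (hk : G.Adj k1 k2)
    (e11 : ¬G.Adj p1 k1) (e12 : ¬G.Adj p1 k2) (e21 : ¬G.Adj p2 k1) (e22 : ¬G.Adj p2 k2)
    (e31 : ¬G.Adj p3 k1) (e32 : ¬G.Adj p3 k2)
    (d11 : p1 ≠ k1) (d12 : p1 ≠ k2) (d21 : p2 ≠ k1) (d22 : p2 ≠ k2)
    (d31 : p3 ≠ k1) (d32 : p3 ≠ k2)
    (hv1 : G.Adj v p1) (hv2 : G.Adj v p2) (hv3 : G.Adj v p3)
    (hvk1 : G.Adj v k1) (hvk2 : G.Adj v k2) :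
    Contains G J2 := by
  have q1 := h12.ne; have q2 := h23.ne; have q3 := hk.ne
  have q4 := hv1.ne; have q5 := hv2.ne; have q6 := hv3.ne
  have q7 := hvk1.ne; have q8 := hvk2.ne
  have s1 := h12.symm; have s2 := h23.symm; have s3 := hk.symm
  have s4 := hv1.symm; have s5 := hv2.symm; have s6 := hv3.symm
  have s7 := hvk1.symm; have s8 := hvk2.symm
  have m0 : ¬G.Adj p3 p1 := fun h => h13 h.symm
  have m1 : ¬G.Adj k1 p1 := fun h => e11 h.symm
  have m2 : ¬G.Adj k2 p1 := fun h => e12 h.symm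
  have m3 : ¬G.Adj k1 p2 := fun h => e21 h.symm
  have m4 : ¬G.Adj k2 p2 := fun h => e22 h.symm
  have m5 : ¬G.Adj k1 p3 := fun h => e31 h.symm
  have m6 : ¬G.Adj k2 p3 := fun h => e32 h.symm
  have w1 : d11.symm = d11.symm := rfl
  have t1 : (pathGraph 3).Adj 0 1 := by decide
  have t2 : (pathGraph 3).Adj 1 2 := by decide
  have t3 : (pathGraph 3).Adj 1 0 := by decide
  have t4 : (pathGraph 3).Adj 2 1 := by decide
  have t5 : ¬(pathGraph 3).Adj 0 2 := by decide
  have t6 : ¬(pathGraph 3).Adj 2 0 := by decide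
  refine ⟨⟨⟨Sum.elim ![v] (Sum.elim ![p1,p2,p3] ![k1,k2]), ?_⟩, ?_⟩⟩
  · rintro (i|i|i) (j|j|j) h <;> fin_cases i <;> fin_cases j <;>
      simp_all [d11.symm, d12.symm, d21.symm, d22.symm, d31.symm, d32.symm]
  · rintro (i|i|i) (j|j|j) <;> fin_cases i <;> fin_cases j <;>
      simp_all [J2, KG, DFunLike.coe] <;> decide

set_option maxHeartbeats 1000000 in
lemma containsJ3_of {G : SimpleGraph α} {t1 t2 x y z w : α}
    (ht : G.Adj t1 t2)
    (hxy : G.Adj x y) (hzw : G.Adj z w)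
    (hxz : ¬G.Adj x z) (hxw : ¬G.Adj x w) (hyz : ¬G.Adj y z) (hyw : ¬G.Adj y w)
    (n1 : x ≠ z) (n2 : x ≠ w) (n3 : y ≠ z) (n4 : y ≠ w)
    (a1 : G.Adj t1 x) (a2 : G.Adj t1 y) (a3 : G.Adj t1 z) (a4 : G.Adj t1 w)
    (b1 : G.Adj t2 x) (b2 : G.Adj t2 y) (b3 : G.Adj t2 z) (b4 : G.Adj t2 w) :
    Contains G J3 := by
  have q0 := ht.ne; have q1 := hxy.ne; have q2 := hzw.ne
  have q3 := a1.ne; have q4 := a2.ne; have q5 := a3.ne; have q6 := a4.ne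
  have q7 := b1.ne; have q8 := b2.ne; have q9 := b3.ne; have q10 := b4.ne
  have s0 := ht.symm; have s1 := hxy.symm; have s2 := hzw.symm
  have s3 := a1.symm; have s4 := a2.symm; have s5 := a3.symm; have s6 := a4.symm
  have s7 := b1.symm; have s8 := b2.symm; have s9 := b3.symm; have s10 := b4.symm
  have m1 : ¬G.Adj z x := fun h => hxz h.symm
  have m2 : ¬G.Adj w x := fun h => hxw h.symm
  have m3 : ¬G.Adj z y := fun h => hyz h.symm
  have m4 : ¬G.Adj w y := fun h => hyw h.symm
  refine ⟨⟨⟨Sum.elim ![t1,t2] (Sum.elim ![x,y] ![z,w]), ?_⟩, ?_⟩⟩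
  · rintro (i|i|i) (j|j|j) h <;> fin_cases i <;> fin_cases j <;>
      simp_all [n1.symm, n2.symm, n3.symm, n4.symm]
  · rintro (i|i|i) (j|j|j) <;> fin_cases i <;> fin_cases j <;>
      simp_all [J3, twoK2, KG, DFunLike.coe] <;> decide

set_option maxHeartbeats 1000000 in
lemma containsJ4_of {G : SimpleGraph α} {x1 y1 z1 x2 y2 z2 : α}
    (h1 : G.Adj x1 y1) (hz1x : ¬G.Adj x1 z1) (hz1y : ¬G.Adj y1 z1)
    (d1x : x1 ≠ z1) (d1y : y1 ≠ z1)
    (h2 : G.Adj x2 y2) (hz2x : ¬G.Adj x2 z2) (hz2y : ¬G.Adj y2 z2)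
    (d2x : x2 ≠ z2) (d2y : y2 ≠ z2)
    (c11 : G.Adj x1 x2) (c12 : G.Adj x1 y2) (c13 : G.Adj x1 z2)
    (c21 : G.Adj y1 x2) (c22 : G.Adj y1 y2) (c23 : G.Adj y1 z2)
    (c31 : G.Adj z1 x2) (c32 : G.Adj z1 y2) (c33 : G.Adj z1 z2) :
    Contains G J4 := by
  have q1 := h1.ne; have q2 := h2.ne
  have r1 := c11.ne; have r2 := c12.ne; have r3 := c13.ne
  have r4 := c21.ne; have r5 := c22.ne; have r6 := c23.ne
  have r7 := c31.ne; have r8 := c32.ne; have r9 := c33.ne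
  have u1 := h1.symm; have u2 := h2.symm
  have v1 := c11.symm; have v2 := c12.symm; have v3 := c13.symm
  have v4 := c21.symm; have v5 := c22.symm; have v6 := c23.symm
  have v7 := c31.symm; have v8 := c32.symm; have v9 := c33.symm
  have m1 : ¬G.Adj z1 x1 := fun h => hz1x h.symm
  have m2 : ¬G.Adj z1 y1 := fun h => hz1y h.symm
  have m3 : ¬G.Adj z2 x2 := fun h => hz2x h.symm
  have m4 : ¬G.Adj z2 y2 := fun h => hz2y h.symm
  refine ⟨⟨⟨Sum.elim (Sum.elim ![x1,y1] ![z1]) (Sum.elim ![x2,y2] ![z2]), ?_⟩, ?_⟩⟩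
  · rintro ((i|i)|(i|i)) ((j|j)|(j|j)) h <;> fin_cases i <;> fin_cases j <;>
      simp_all [d1x.symm, d1y.symm, d2x.symm, d2y.symm]
  · rintro ((i|i)|(i|i)) ((j|j)|(j|j)) <;> fin_cases i <;> fin_cases j <;>
      simp_all [J4, K2uK1, KG, DFunLike.coe] <;> decide
lemma induce_bot_iff {G : SimpleGraph α} {s : Set α} :
    (G.induce s).CliqueFree 2 ↔ ∀ a ∈ s, ∀ b ∈ s, ¬G.Adj a b := by
  rw [SimpleGraph.cliqueFree_two]
  constructor
  · intro h a ha b hb hadj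
    have : (G.induce s).Adj ⟨a, ha⟩ ⟨b, hb⟩ := hadj
    rw [h] at this
    exact this
  · intro h
    ext x y
    simp only [SimpleGraph.bot_adj, iff_false]
    intro hadj
    exact h x x.2 y y.2 hadj

lemma monopolar_iff_vertexform {G : SimpleGraph α} :
    Monopolar G ↔ ∃ A : Set α,
      (∀ a ∈ A, ∀ b ∈ A, ¬G.Adj a b) ∧
      (∀ a b c : α, a ∉ A → b ∉ A → c ∉ A → G.Adj a b → G.Adj b c → a ≠ c → G.Adj a c) := by
  constructor
  · rintro ⟨A, hind, hp3⟩
    refine ⟨A, induce_bot_iff.1 hind, ?_⟩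
    intro a b c ha hb hc hab hbc hac
    by_contra hnadj
    exact hp3 (containsP3_iff.2 ⟨⟨a, ha⟩, ⟨b, hb⟩, ⟨c, hc⟩,
      fun e => hac (congrArg Subtype.val e), hab, hbc, hnadj⟩)
  · rintro ⟨A, hind, hp3⟩
    refine ⟨A, induce_bot_iff.2 hind, ?_⟩
    intro hc
    obtain ⟨a, b, c, hne, hab, hbc, hnac⟩ := containsP3_iff.1 hc
    exact hnac (hp3 ↑a ↑b ↑c a.2 b.2 c.2 hab hbc (fun e => hne (Subtype.ext e)))

lemma Monopolar.of_embedding {G : SimpleGraph α} {H : SimpleGraph β} (f : H ↪g G)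
    (h : Monopolar G) : Monopolar H := by
  rw [monopolar_iff_vertexform] at h ⊢
  obtain ⟨A, hind, hp3⟩ := h
  refine ⟨f ⁻¹' A, ?_, ?_⟩
  · intro a ha b hb hadj
    exact hind (f a) ha (f b) hb (f.map_rel_iff.2 hadj)
  · intro a b c ha hb hc hab hbc hac
    exact f.map_rel_iff.1 (hp3 (f a) (f b) (f c) ha hb hc
      (f.map_rel_iff.2 hab) (f.map_rel_iff.2 hbc) (fun e => hac (f.injective e)))

lemma monopolar_iff_finset {α : Type u} [Fintype α] [DecidableEq α] {G : SimpleGraph α} :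
    Monopolar G ↔ ∃ A : Finset α,
      (∀ a ∈ A, ∀ b ∈ A, ¬G.Adj a b) ∧
      (∀ a b c : α, a ∉ A → b ∉ A → c ∉ A → G.Adj a b → G.Adj b c → a ≠ c → G.Adj a c) := by
  rw [monopolar_iff_vertexform]
  constructor
  · rintro ⟨A, h1, h2⟩
    refine ⟨(Set.toFinite A).toFinset, ?_, ?_⟩
    · intro a ha b hb; rw [Set.Finite.mem_toFinset] at ha hb; exact h1 a ha b hb
    · intro a b c ha hb hc; rw [Set.Finite.mem_toFinset] at ha hb hc; exact h2 a b c ha hb hc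
  · rintro ⟨A, h1, h2⟩
    exact ⟨↑A, fun a ha b hb => h1 a ha b hb, fun a b c ha hb hc => h2 a b c ha hb hc⟩

instance gJoinDec {G : SimpleGraph α} {H : SimpleGraph β}
    [DecidableRel G.Adj] [DecidableRel H.Adj] : DecidableRel (gJoin G H).Adj := fun x y =>
  match x, y with
  | .inl a, .inl b => inferInstanceAs (Decidable (G.Adj a b))
  | .inl _, .inr _ => .isTrue trivial
  | .inr _, .inl _ => .isTrue trivial
  | .inr a, .inr b => inferInstanceAs (Decidable (H.Adj a b))

instance gUnionDec {G : SimpleGraph α} {H : SimpleGraph β}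
    [DecidableRel G.Adj] [DecidableRel H.Adj] : DecidableRel (gUnion G H).Adj := fun x y =>
  match x, y with
  | .inl a, .inl b => inferInstanceAs (Decidable (G.Adj a b))
  | .inl _, .inr _ => .isFalse id
  | .inr _, .inl _ => .isFalse id
  | .inr a, .inr b => inferInstanceAs (Decidable (H.Adj a b))

instance KGDec {n : ℕ} : DecidableRel (KG n).Adj := fun a b =>
  inferInstanceAs (Decidable (a ≠ b))

instance EGDec {n : ℕ} : DecidableRel (EG n).Adj := fun _ _ => .isFalse id

instance : DecidableRel J1.Adj :=
  inferInstanceAs (DecidableRel (gJoin (cycleGraph 4) (KG 1)).Adj)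
instance : DecidableRel J2.Adj :=
  inferInstanceAs (DecidableRel (gJoin (KG 1) (gUnion (pathGraph 3) (KG 2))).Adj)
instance : DecidableRel J3.Adj :=
  inferInstanceAs (DecidableRel (gJoin (KG 2) (gUnion (KG 2) (KG 2))).Adj)
instance : DecidableRel J4.Adj :=
  inferInstanceAs (DecidableRel (gJoin (gUnion (KG 2) (KG 1)) (gUnion (KG 2) (KG 1))).Adj)

set_option synthInstance.maxSize 2000 in
lemma notMonoJ1 : ¬ Monopolar J1 := by rw [monopolar_iff_finset]; decide
set_option synthInstance.maxSize 2000 in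
lemma notMonoJ2 : ¬ Monopolar J2 := by rw [monopolar_iff_finset]; decide
set_option synthInstance.maxSize 2000 in
lemma notMonoJ3 : ¬ Monopolar J3 := by rw [monopolar_iff_finset]; decide
set_option synthInstance.maxSize 2000 in
lemma notMonoJ4 : ¬ Monopolar J4 := by rw [monopolar_iff_finset]; decide
lemma k2uk1_in {G : SimpleGraph α} {Q : α → Prop}
    (h3 : ∀ u v w, Q u → Q v → Q w → G.Adj u v → G.Adj v w → u ≠ w → G.Adj u w)
    {x y a b : α} (hx : Q x) (hy : Q y) (ha : Q a) (hb : Q b)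
    (hxy : G.Adj x y) (hab : ¬G.Adj a b) (hne : a ≠ b) :
    ∃ u v w, Q u ∧ Q v ∧ Q w ∧ G.Adj u v ∧ ¬G.Adj u w ∧ ¬G.Adj v w ∧ w ≠ u ∧ w ≠ v := by
  by_cases hax : a = x
  · refine ⟨x, y, b, hx, hy, hb, hxy, ?_, ?_, ?_, ?_⟩
    · exact fun h => hab (by rw [hax]; exact h)
    · intro h
      have hbnx : b ≠ x := fun e => hne (hax.trans e.symm)
      exact hab (by rw [hax]; exact (h3 b y x hb hy hx h.symm hxy.symm hbnx).symm)
    · exact fun e => hne (hax.trans e.symm)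
    · intro e
      exact hab (by rw [hax, e]; exact hxy)
  by_cases hay : a = y
  · refine ⟨x, y, b, hx, hy, hb, hxy, ?_, ?_, ?_, ?_⟩
    · intro h
      have hbny : b ≠ y := fun e => hne (hay.trans e.symm)
      exact hab (by rw [hay]; exact (h3 b x y hb hx hy h.symm hxy hbny).symm)
    · exact fun h => hab (by rw [hay]; exact h)
    · intro e
      exact hab (by rw [hay, e]; exact hxy.symm)
    · exact fun e => hne (hay.trans e.symm)
  by_cases hbx : b = x
  · refine ⟨x, y, a, hx, hy, ha, hxy, ?_, ?_, hax, hay⟩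
    · exact fun h => hab (by rw [hbx]; exact h.symm)
    · intro h
      exact hab (by rw [hbx]; exact (h3 a y x ha hy hx h.symm hxy.symm hax))
  by_cases hby : b = y
  · refine ⟨x, y, a, hx, hy, ha, hxy, ?_, ?_, hax, hay⟩
    · intro h
      exact hab (by rw [hby]; exact (h3 a x y ha hx hy h.symm hxy hay))
    · exact fun h => hab (by rw [hby]; exact h.symm)
  -- all distinct
  by_cases haxy : ¬G.Adj a x ∧ ¬G.Adj a y
  · exact ⟨x, y, a, hx, hy, ha, hxy, fun h => haxy.1 h.symm, fun h => haxy.2 h.symm, hax, hay⟩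
  · have haX : G.Adj a x ∧ G.Adj a y := by
      rcases not_and_or.1 haxy with h | h
      · have h' := not_not.1 h
        exact ⟨h', h3 a x y ha hx hy h' hxy hay⟩
      · have h' := not_not.1 h
        exact ⟨h3 a y x ha hy hx h' hxy.symm hax, h'⟩
    by_cases hbxy : ¬G.Adj b x ∧ ¬G.Adj b y
    · exact ⟨x, y, b, hx, hy, hb, hxy, fun h => hbxy.1 h.symm, fun h => hbxy.2 h.symm, hbx, hby⟩
    · exfalso
      have hbX : G.Adj b x := by
        rcases not_and_or.1 hbxy with h | h
        · exact not_not.1 h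
        · exact h3 b y x hb hy hx (not_not.1 h) hxy.symm hbx
      exact hab (h3 a x b ha hx hb haX.1 hbX.symm hne)

lemma main_bw : ∀ (n : ℕ) {α : Type u} [Fintype α] (G : SimpleGraph α),
    Fintype.card α ≤ n → IsCograph G →
    ¬ Contains G J1 → ¬ Contains G J2 → ¬ Contains G J3 → ¬ Contains G J4 →
    Monopolar G := by
  intro n
  induction n with
  | zero =>
    intro α _ G hc _ _ _ _ _
    have : IsEmpty α := Fintype.card_eq_zero_iff.1 (le_antisymm hc (Nat.zero_le _))
    rw [monopolar_iff_vertexform]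
    exact ⟨∅, fun a => (this.false a).elim, fun a => (this.false a).elim⟩
  | succ n IH =>
    intro α inst G hcard hcog hJ1 hJ2 hJ3 hJ4
    classical
    by_cases hpre : G.Preconnected
    · by_cases hsmall : Fintype.card α ≤ 1
      · have hss : Subsingleton α := Fintype.card_le_one_iff_subsingleton.1 hsmall
        rw [monopolar_iff_vertexform]
        exact ⟨∅, fun a _ b _ hadj => hadj.ne (Subsingleton.elim a b),
          fun a b c _ _ _ _ _ hac => (hac (Subsingleton.elim a c)).elim⟩
      · -- connected, card ≥ 2
        have hcard2 : 2 ≤ Fintype.card α := by omega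
        obtain ⟨u0, w0, hu0w0⟩ := seinsche (Fintype.card α) G le_rfl hcog hpre hcard2
        -- cross-part adjacency
        have cross : ∀ {z z' : α}, ¬ Gᶜ.Reachable z z' → G.Adj z z' := fun h => adj_of_not_coreach h
        by_cases hstar : ∃ a b a' b' : α, ¬G.Adj a b ∧ a ≠ b ∧ ¬G.Adj a' b' ∧ a' ≠ b' ∧
            ¬ Gᶜ.Reachable a a'
        · -- two non-clique parts
          obtain ⟨a, b, a', b', hnab, hneab, hnab', hneab', hsep⟩ := hstar
          have cab : Gᶜ.Adj a b := ⟨hneab, hnab⟩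
          have cab' : Gᶜ.Adj a' b' := ⟨hneab', hnab'⟩
          have sep : ∀ {z z' : α}, Gᶜ.Reachable z a → Gᶜ.Reachable z' a' →
              ¬ Gᶜ.Reachable z z' := fun hz hz' h => hsep (hz.symm.trans (h.trans hz'))
          have adjPP' : ∀ {z z' : α}, Gᶜ.Reachable z a → Gᶜ.Reachable z' a' → G.Adj z z' :=
            fun hz hz' => cross (sep hz hz')
          have claim1 : ∀ z, Gᶜ.Reachable z a ∨ Gᶜ.Reachable z a' := by
            intro z
            by_contra hcon
            push_neg at hcon
            obtain ⟨hz1, hz2⟩ := hcon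
            have hzb : ¬ Gᶜ.Reachable z b := fun h => hz1 (h.trans cab.symm.reachable)
            have hzb' : ¬ Gᶜ.Reachable z b' := fun h => hz2 (h.trans cab'.symm.reachable)
            refine hJ1 (containsJ1_of (a := a) (b := a') (c := b) (d := b') (e := z)
              ?_ ?_ ?_ ?_ hnab hnab' hneab hneab' (cross hz1) (cross hz2) (cross hzb) (cross hzb'))
            · exact adjPP' (Reachable.refl a) (Reachable.refl a')
            · exact (adjPP' cab.symm.reachable (Reachable.refl a')).symm
            · exact adjPP' cab.symm.reachable cab'.symm.reachable
            · exact (adjPP' (Reachable.refl a) cab'.symm.reachable).symm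
          have P3free : ∀ (c1 c2 d1 d2 : α), ¬G.Adj c1 c2 → c1 ≠ c2 → ¬G.Adj d1 d2 → d1 ≠ d2 →
              ¬Gᶜ.Reachable c1 d1 →
              ∀ x yy z, Gᶜ.Reachable x c1 → Gᶜ.Reachable yy c1 → Gᶜ.Reachable z c1 →
                G.Adj x yy → G.Adj yy z → x ≠ z → G.Adj x z := by
            intro c1 c2 d1 d2 hn hne1 hn' hne2 hsep2 x yy z hxc hyc hzc hxy hyz hxz
            by_contra hnadj
            have cdd : Gᶜ.Adj d1 d2 := ⟨hne2, hn'⟩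
            have sep2 : ∀ {u u' : α}, Gᶜ.Reachable u c1 → Gᶜ.Reachable u' d1 →
                ¬ Gᶜ.Reachable u u' := fun hu hu' h => hsep2 (hu.symm.trans (h.trans hu'))
            refine hJ1 (containsJ1_of (a := x) (b := d1) (c := z) (d := d2) (e := yy)
              (cross (sep2 hxc (Reachable.refl d1)))
              (cross (sep2 hzc (Reachable.refl d1))).symm
              (cross (sep2 hzc cdd.symm.reachable))
              (cross (sep2 hxc cdd.symm.reachable)).symm
              hnadj hn' hxz hne2
              hxy.symm (cross (sep2 hyc (Reachable.refl d1))) hyz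
              (cross (sep2 hyc cdd.symm.reachable)))
          have P3freeA := P3free a b a' b' hnab hneab hnab' hneab' hsep
          have P3freeA' := P3free a' b' a b hnab' hneab' hnab hneab (fun h => hsep h.symm)
          have F3 : ¬ ((∃ e1 e2, Gᶜ.Reachable e1 a ∧ Gᶜ.Reachable e2 a ∧ G.Adj e1 e2) ∧
              (∃ f1 f2, Gᶜ.Reachable f1 a' ∧ Gᶜ.Reachable f2 a' ∧ G.Adj f1 f2)) := by
            rintro ⟨⟨e1, e2, he1, he2, hee⟩, ⟨f1, f2, hf1, hf2, hff⟩⟩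
            obtain ⟨u, v, w, hqu, hqv, hqw, huv, huw, hvw, hwu, hwv⟩ :=
              k2uk1_in (Q := fun z => Gᶜ.Reachable z a) P3freeA he1 he2
                (Reachable.refl a) cab.symm.reachable hee hnab hneab
            obtain ⟨u', v', w', hqu', hqv', hqw', huv', huw', hvw', hwu', hwv'⟩ :=
              k2uk1_in (Q := fun z => Gᶜ.Reachable z a') P3freeA' hf1 hf2
                (Reachable.refl a') cab'.symm.reachable hff hnab' hneab'
            exact hJ4 (containsJ4_of huv huw hvw hwu.symm hwv.symm huv' huw' hvw'
              hwu'.symm hwv'.symm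
              (adjPP' hqu hqu') (adjPP' hqu hqv') (adjPP' hqu hqw')
              (adjPP' hqv hqu') (adjPP' hqv hqv') (adjPP' hqv hqw')
              (adjPP' hqw hqu') (adjPP' hqw hqv') (adjPP' hqw hqw'))
          have main : ∀ (c1 d1 : α), (∀ z, Gᶜ.Reachable z c1 ∨ Gᶜ.Reachable z d1) →
              (∀ x yy z, Gᶜ.Reachable x d1 → Gᶜ.Reachable yy d1 → Gᶜ.Reachable z d1 →
                G.Adj x yy → G.Adj yy z → x ≠ z → G.Adj x z) →
              (∀ z z', Gᶜ.Reachable z c1 → Gᶜ.Reachable z' c1 → ¬ G.Adj z z') →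
              Monopolar G := by
            intro c1 d1 hcl hP3 hnoe
            rw [monopolar_iff_vertexform]
            refine ⟨{z | Gᶜ.Reachable z c1}, ?_, ?_⟩
            · intro p hp q hq hadj
              exact hnoe p q hp hq hadj
            · intro p q r hp hq hr hpq hqr hpr
              have hp' := (hcl p).resolve_left hp
              have hq' := (hcl q).resolve_left hq
              have hr' := (hcl r).resolve_left hr
              exact hP3 p q r hp' hq' hr' hpq hqr hpr
          by_cases hEdgeA : ∃ e1 e2, Gᶜ.Reachable e1 a ∧ Gᶜ.Reachable e2 a ∧ G.Adj e1 e2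
          · refine main a' a (fun z => (claim1 z).symm) P3freeA ?_
            intro z z' hz hz' hadj
            exact F3 ⟨hEdgeA, ⟨z, z', hz, hz', hadj⟩⟩
          · push_neg at hEdgeA
            exact main a a' claim1 P3freeA' (fun z z' hz hz' => hEdgeA z z' hz hz')
        · -- at most one non-clique part
          push_neg at hstar
          by_cases hcomp : ∀ a b : α, a ≠ b → G.Adj a b
          · rw [monopolar_iff_vertexform]
            exact ⟨∅, fun p hp => absurd hp (Set.notMem_empty p),
              fun p q r _ _ _ _ _ hpr => hcomp p r hpr⟩
          · push_neg at hcomp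
            obtain ⟨a0, b0, hne0, hnadj0⟩ := hcomp
            set P : Set α := {z | Gᶜ.Reachable a0 z} with hPdef
            have hPa0 : a0 ∈ P := Reachable.refl a0
            have nonedge_in_P : ∀ {x y : α}, ¬G.Adj x y → x ≠ y → x ∈ P ∧ y ∈ P := by
              intro x y hn hne
              have h1 : Gᶜ.Reachable x a0 := hstar x y a0 b0 hn hne hnadj0 hne0
              exact ⟨h1.symm, h1.symm.trans (SimpleGraph.Adj.reachable ⟨hne, hn⟩)⟩
            have outside_univ : ∀ {z t : α}, z ∉ P → z ≠ t → G.Adj z t := by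
              intro z t hz hne
              by_contra hn
              exact hz (nonedge_in_P hn hne).1
            have hv0' : ∃ v0, v0 ∉ P := by
              by_contra hall
              push_neg at hall
              exact hu0w0 ((hall u0).symm.trans (hall w0))
            obtain ⟨v0, hv0⟩ := hv0'
            by_cases h2k2 : ∃ x y z w, G.Adj x y ∧ G.Adj z w ∧ ¬G.Adj x z ∧ ¬G.Adj x w ∧
                ¬G.Adj y z ∧ ¬G.Adj y w ∧ x ≠ z ∧ x ≠ w ∧ y ≠ z ∧ y ≠ w
            · obtain ⟨x, y, z, w, hxy, hzw, hxz, hxw, hyz, hyw, n1, n2, n3, n4⟩ := h2k2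
              have hxP : x ∈ P := (nonedge_in_P hxz n1).1
              have hzP : z ∈ P := (nonedge_in_P hxz n1).2
              have hyP : y ∈ P := (nonedge_in_P hyz n3).1
              have hwP : w ∈ P := (nonedge_in_P hxw n2).2
              have hsingle : ∀ {s1 s2 : α}, s1 ∉ P → s2 ∉ P → s1 = s2 := by
                intro s1 s2 h1 h2
                by_contra hne
                exact hJ3 (containsJ3_of (outside_univ h1 hne) hxy hzw hxz hxw hyz hyw
                  n1 n2 n3 n4
                  (outside_univ h1 (fun e => h1 (e ▸ hxP)))
                  (outside_univ h1 (fun e => h1 (e ▸ hyP)))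
                  (outside_univ h1 (fun e => h1 (e ▸ hzP)))
                  (outside_univ h1 (fun e => h1 (e ▸ hwP)))
                  (outside_univ h2 (fun e => h2 (e ▸ hxP)))
                  (outside_univ h2 (fun e => h2 (e ▸ hyP)))
                  (outside_univ h2 (fun e => h2 (e ▸ hzP)))
                  (outside_univ h2 (fun e => h2 (e ▸ hwP))))
              have hP3free : ∀ p q r, p ∈ P → q ∈ P → r ∈ P →
                  G.Adj p q → G.Adj q r → p ≠ r → G.Adj p r := by
                intro p q r hp hq hr hpq hqr hpr
                by_contra hnpr
                set H : SimpleGraph ↥P := G.induce P with hHdef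
                by_cases hreach : H.Reachable ⟨x, hxP⟩ ⟨z, hzP⟩
                · obtain ⟨t, ht1, ht2, ht3, ht4, ha1, ha2, ha3, ha4⟩ :=
                    common_nbr_of_2K2 (hcog.induce P)
                      (show H.Adj ⟨x, hxP⟩ ⟨y, hyP⟩ from hxy)
                      (show H.Adj ⟨z, hzP⟩ ⟨w, hwP⟩ from hzw)
                      hxz hxw hyz hyw
                      (fun e => n1 (congrArg Subtype.val e))
                      (fun e => n2 (congrArg Subtype.val e))
                      (fun e => n3 (congrArg Subtype.val e))
                      (fun e => n4 (congrArg Subtype.val e)) hreach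
                  exact hJ3 (containsJ3_of (t1 := v0) (t2 := ↑t)
                    (outside_univ hv0 (fun e => hv0 (e ▸ t.2)))
                    hxy hzw hxz hxw hyz hyw n1 n2 n3 n4
                    (outside_univ hv0 (fun e => hv0 (e ▸ hxP)))
                    (outside_univ hv0 (fun e => hv0 (e ▸ hyP)))
                    (outside_univ hv0 (fun e => hv0 (e ▸ hzP)))
                    (outside_univ hv0 (fun e => hv0 (e ▸ hwP)))
                    ha1 ha2 ha3 ha4)
                · have hedge : ∃ (e1 e2 : α) (he1 : e1 ∈ P) (he2 : e2 ∈ P), G.Adj e1 e2 ∧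
                      ¬ H.Reachable ⟨q, hq⟩ ⟨e1, he1⟩ := by
                    by_cases hqx : H.Reachable ⟨q, hq⟩ ⟨x, hxP⟩
                    · exact ⟨z, w, hzP, hwP, hzw, fun h => hreach (hqx.symm.trans h)⟩
                    · exact ⟨x, y, hxP, hyP, hxy, hqx⟩
                  obtain ⟨e1, e2, he1, he2, hee, hqe⟩ := hedge
                  have hnp : ∀ (t : α) (htP : t ∈ P), H.Reachable ⟨q, hq⟩ ⟨t, htP⟩ →
                      ¬G.Adj t e1 ∧ ¬G.Adj t e2 ∧ t ≠ e1 ∧ t ≠ e2 := by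
                    intro t htP hqt
                    have h1 : ¬G.Adj t e1 := fun h =>
                      hqe (hqt.trans (show H.Adj ⟨t, htP⟩ ⟨e1, he1⟩ from h).reachable)
                    have h2 : ¬G.Adj t e2 := fun h =>
                      hqe (hqt.trans ((show H.Adj ⟨t, htP⟩ ⟨e2, he2⟩ from h).reachable.trans
                        (show H.Adj ⟨e2, he2⟩ ⟨e1, he1⟩ from hee.symm).reachable))
                    refine ⟨h1, h2, ?_, ?_⟩
                    · intro e
                      apply hqe
                      rw [← show (⟨t, htP⟩ : ↥P) = ⟨e1, he1⟩ from Subtype.ext e]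
                      exact hqt
                    · intro e
                      apply hqe
                      rw [show (⟨t, htP⟩ : ↥P) = ⟨e2, he2⟩ from Subtype.ext e] at hqt
                      exact hqt.trans (show H.Adj ⟨e2, he2⟩ ⟨e1, he1⟩ from hee.symm).reachable
                  obtain ⟨p1, p2, p3, p4⟩ := hnp p hp
                    (show H.Adj ⟨q, hq⟩ ⟨p, hp⟩ from hpq.symm).reachable
                  obtain ⟨q1, q2, q3, q4⟩ := hnp q hq (Reachable.refl _)
                  obtain ⟨r1, r2, r3, r4⟩ := hnp r hr
                    (show H.Adj ⟨q, hq⟩ ⟨r, hr⟩ from hqr).reachable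
                  exact hJ2 (containsJ2_of hpq hqr hnpr hpr hee p1 p2 q1 q2 r1 r2 p3 p4 q3 q4 r3 r4
                    (outside_univ hv0 (fun e => hv0 (e ▸ hp)))
                    (outside_univ hv0 (fun e => hv0 (e ▸ hq)))
                    (outside_univ hv0 (fun e => hv0 (e ▸ hr)))
                    (outside_univ hv0 (fun e => hv0 (e ▸ he1)))
                    (outside_univ hv0 (fun e => hv0 (e ▸ he2))))
              rw [monopolar_iff_vertexform]
              refine ⟨Pᶜ, ?_, ?_⟩
              · intro p hp q hq hadj
                exact hadj.ne (hsingle hp hq)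
              · intro p q r hp hq hr hpq hqr hpr
                rw [Set.mem_compl_iff, not_not] at hp hq hr
                exact hP3free p q r hp hq hr hpq hqr hpr
            · have hC4 : NoC4 G := by
                rintro ⟨c1, c2, c3, c4, h12, h23, h34, h41, h13, h24, ne13, ne24⟩
                have hc1 : c1 ∈ P := (nonedge_in_P h13 ne13).1
                have hc3 : c3 ∈ P := (nonedge_in_P h13 ne13).2
                have hc2 : c2 ∈ P := (nonedge_in_P h24 ne24).1
                have hc4 : c4 ∈ P := (nonedge_in_P h24 ne24).2
                exact hJ1 (containsJ1_of h12 h23 h34 h41 h13 h24 ne13 ne24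
                  (outside_univ hv0 (fun e => hv0 (e ▸ hc1)))
                  (outside_univ hv0 (fun e => hv0 (e ▸ hc2)))
                  (outside_univ hv0 (fun e => hv0 (e ▸ hc3)))
                  (outside_univ hv0 (fun e => hv0 (e ▸ hc4))))
              obtain ⟨K, hKc, hKi⟩ := threshold_split (Fintype.card α) G le_rfl hcog h2k2 hC4
              rw [monopolar_iff_vertexform]
              refine ⟨Kᶜ, fun p hp q hq hadj => hKi p hp q hq hadj, ?_⟩
              intro p q r hp hq hr hpq hqr hpr
              rw [Set.mem_compl_iff, not_not] at hp hr
              exact hKc p hp r hr hpr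
    · -- disconnected: split into two pieces
      unfold SimpleGraph.Preconnected at hpre
      push_neg at hpre
      obtain ⟨p, q, hpq⟩ := hpre
      set s : Set α := {z | G.Reachable p z} with hsdef
      have hps : p ∈ s := Reachable.refl p
      have hqs : q ∉ s := hpq
      have hclosed : ∀ z w, G.Adj z w → z ∈ s → w ∈ s := fun z w hadj hz => hz.trans hadj.reachable
      have hcard1 : Fintype.card ↥s ≤ n := by
        have h1 := Fintype.card_subtype_lt (p := fun z => z ∈ s) (x := q) hqs
        have h2 : Fintype.card {x // (fun z => z ∈ s) x} = Fintype.card ↥s :=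
          Fintype.card_congr (Equiv.refl _)
        have h3 : Fintype.card ↥s < Fintype.card α := by convert h1
        omega
      have hcard2 : Fintype.card ↥sᶜ ≤ n := by
        have h1 := Fintype.card_subtype_lt (p := fun z => z ∈ sᶜ) (x := p) (fun h => h hps)
        have h2 : Fintype.card {x // (fun z => z ∈ sᶜ) x} = Fintype.card ↥sᶜ :=
          Fintype.card_congr (Equiv.refl _)
        have h3 : Fintype.card ↥sᶜ < Fintype.card α := by convert h1
        omega
      have m1 := IH (G.induce s) hcard1 (hcog.induce s)
        (fun hc => hJ1 (contains_of_induce hc)) (fun hc => hJ2 (contains_of_induce hc))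
        (fun hc => hJ3 (contains_of_induce hc)) (fun hc => hJ4 (contains_of_induce hc))
      have m2 := IH (G.induce sᶜ) hcard2 (hcog.induce sᶜ)
        (fun hc => hJ1 (contains_of_induce hc)) (fun hc => hJ2 (contains_of_induce hc))
        (fun hc => hJ3 (contains_of_induce hc)) (fun hc => hJ4 (contains_of_induce hc))
      rw [monopolar_iff_vertexform] at m1 m2 ⊢
      obtain ⟨A1, hA1i, hA1p⟩ := m1
      obtain ⟨A2, hA2i, hA2p⟩ := m2
      refine ⟨{z | ∃ hz : z ∈ s, (⟨z, hz⟩ : ↥s) ∈ A1} ∪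
              {z | ∃ hz : z ∈ sᶜ, (⟨z, hz⟩ : ↥sᶜ) ∈ A2}, ?_, ?_⟩
      · rintro a (⟨ha, haA⟩ | ⟨ha, haA⟩) b (⟨hb, hbA⟩ | ⟨hb, hbA⟩) hadj
        · exact hA1i _ haA _ hbA hadj
        · exact hb (hclosed a b hadj ha)
        · exact ha (hclosed b a hadj.symm hb)
        · exact hA2i _ haA _ hbA hadj
      · intro a b c ha hb hc hab hbc hac
        simp only [Set.mem_union, Set.mem_setOf_eq, not_or, not_exists] at ha hb hc
        by_cases hbs : b ∈ s
        · have has : a ∈ s := hclosed b a hab.symm hbs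
          have hcs : c ∈ s := hclosed b c hbc hbs
          exact hA1p ⟨a, has⟩ ⟨b, hbs⟩ ⟨c, hcs⟩ (ha.1 has) (hb.1 hbs) (hc.1 hcs)
            hab hbc (fun e => hac (congrArg Subtype.val e))
        · have has : a ∉ s := fun h => hbs (hclosed a b hab h)
          have hcs : c ∉ s := fun h => hbs (hclosed c b hbc.symm h)
          exact hA2p ⟨a, has⟩ ⟨b, hbs⟩ ⟨c, hcs⟩ (ha.2 has) (hb.2 hbs) (hc.2 hcs)
            hab hbc (fun e => hac (congrArg Subtype.val e))
theorem stmt_5 {α : Type*} [Fintype α] (G : SimpleGraph α) (hcog : IsCograph G)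
    (hconn : G.Connected) :
    Monopolar G ↔
      (¬ Contains G J1 ∧ ¬ Contains G J2 ∧ ¬ Contains G J3 ∧ ¬ Contains G J4) := by
  constructor
  · intro hm
    refine ⟨fun hc => ?_, fun hc => ?_, fun hc => ?_, fun hc => ?_⟩
    · obtain ⟨f⟩ := hc; exact notMonoJ1 (Monopolar.of_embedding f hm)
    · obtain ⟨f⟩ := hc; exact notMonoJ2 (Monopolar.of_embedding f hm)
    · obtain ⟨f⟩ := hc; exact notMonoJ3 (Monopolar.of_embedding f hm)
    · obtain ⟨f⟩ := hc; exact notMonoJ4 (Monopolar.of_embedding f hm)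
  · rintro ⟨h1, h2, h3, h4⟩
    exact main_bw (Fintype.card α) G le_rfl hcog h1 h2 h3 h4
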